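/- Let n, p, d, m be positive integers; let A be n×n, C be p×n, D be n×d, B be n×m, and Ẑ be n×p real matrices; let Ŷ ≻ 0 be a symmetric n×n matrix, Ē a symmetric n×n matrix, and let W (d×d), V (p×p), Γ_w (m×m) be symmetric positive definite matrices. Define B̂ = Ŷ⁻¹Ẑ and E = Ŷ⁻¹. Then the following two conditions are equivalent: (i) the block matrix [[Ē, I], [I, Ŷ]] is positive definite AND the symmetric 5×5 block matrix with upper-triangular blocks given by row 1: [Ŷ, ŶA − ẐC, ŶD, ŶB, Ẑ], row 2: [Ŷ, 0, 0, 0], row 3: [W⁻¹, 0, 0], row 4: [Γ_w, 0], row 5: [V⁻¹] is positive definite; (ii) E ≺ Ē AND (A − B̂C)E(A − B̂C)ᵀ + DWDᵀ + BΓ_w⁻¹Bᵀ + B̂VB̂ᵀ ≺ E. -/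

import Mathlib

open Matrix

section Helpers

variable {m n : Type*} [Fintype m] [DecidableEq m] [Fintype n] [DecidableEq n]

/-- Strict (PosDef) Schur complement criterion w.r.t. the (2,2) block, over ℝ. -/
theorem myPosDef_fromBlocks₂₂ (A : Matrix m m ℝ) (B : Matrix m n ℝ) {D : Matrix n n ℝ}
    (hD : D.PosDef) :
    (fromBlocks A B Bᴴ D).PosDef ↔ (A - B * D⁻¹ * Bᴴ).PosDef := by
  letI := hD.isUnit.invertible
  rw [posDef_iff_dotProduct_mulVec, posDef_iff_dotProduct_mulVec]
  constructor
  · rintro ⟨h1, h2⟩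
    refine ⟨(IsHermitian.fromBlocks₂₂ A B hD.1).mp h1, fun x hx => ?_⟩
    have hv : (x ⊕ᵥ -((D⁻¹ * Bᴴ) *ᵥ x)) ≠ 0 := fun h => hx (funext fun i => congrFun h (Sum.inl i))
    have := h2 hv
    rw [dotProduct_mulVec, schur_complement_eq₂₂ A B _ _ hD.1, add_neg_cancel] at this
    simpa [dotProduct_mulVec] using this
  · rintro ⟨h1, h2⟩
    refine ⟨(IsHermitian.fromBlocks₂₂ A B hD.1).mpr h1, fun z hz => ?_⟩
    rw [dotProduct_mulVec, ← Sum.elim_comp_inl_inr z, schur_complement_eq₂₂ A B _ _ hD.1]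
    by_cases hx : z ∘ Sum.inl = 0
    · have hy : z ∘ Sum.inr ≠ 0 := by
        intro hy; apply hz
        rw [← Sum.elim_comp_inl_inr z, hx, hy]; ext (i | i) <;> simp
      have hw : (D⁻¹ * Bᴴ) *ᵥ (z ∘ Sum.inl) + z ∘ Sum.inr ≠ 0 := by
        simpa [hx] using hy
      have t1 := hD.dotProduct_mulVec_pos hw
      rw [dotProduct_mulVec] at t1
      have hpsd : (A - B * D⁻¹ * Bᴴ).PosSemidef := (posDef_iff_dotProduct_mulVec.mpr ⟨h1, h2⟩).posSemidef
      have t2 := hpsd.dotProduct_mulVec_nonneg (z ∘ Sum.inl)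
      rw [dotProduct_mulVec] at t2
      exact add_pos_of_pos_of_nonneg t1 t2
    · have t2 := h2 hx
      rw [dotProduct_mulVec] at t2
      have t1 := hD.posSemidef.dotProduct_mulVec_nonneg ((D⁻¹ * Bᴴ) *ᵥ (z ∘ Sum.inl) + z ∘ Sum.inr)
      rw [dotProduct_mulVec] at t1
      exact add_pos_of_nonneg_of_pos t1 t2

/-- Congruence by an invertible matrix preserves positive definiteness. -/
theorem myPosDef_conj {M U : Matrix n n ℝ} (hM : M.PosDef) (hU : IsUnit U) :
    (U * M * Uᴴ).PosDef := by
  rw [posDef_iff_dotProduct_mulVec]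
  constructor
  · exact isHermitian_mul_mul_conjTranspose U hM.1
  · intro x hx
    have hUH : IsUnit Uᴴ := by
      rw [isUnit_iff_isUnit_det] at hU ⊢
      rwa [det_conjTranspose, isUnit_star]
    have h1 : Uᴴ *ᵥ x ≠ 0 :=
      ((Matrix.mulVec_injective_iff_isUnit.mpr hUH).ne_iff' (by simp)).2 hx
    have := hM.dotProduct_mulVec_pos h1
    simpa only [star_mulVec, conjTranspose_conjTranspose, dotProduct_mulVec, vecMul_vecMul,
      Matrix.mul_assoc] using this

theorem myPosDef_conj_iff {M U : Matrix n n ℝ} (hU : IsUnit U) :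
    (U * M * Uᴴ).PosDef ↔ M.PosDef := by
  refine ⟨fun h => ?_, fun h => myPosDef_conj h hU⟩
  have hU' : IsUnit U⁻¹ := by simpa using hU
  have key := myPosDef_conj h hU'
  have e : U⁻¹ * (U * M * Uᴴ) * U⁻¹ᴴ = M := by
    have hdet : IsUnit U.det := (isUnit_iff_isUnit_det U).mp hU
    have hdetH : IsUnit (Uᴴ).det := by rwa [det_conjTranspose, isUnit_star]
    rw [conjTranspose_nonsing_inv]
    calc U⁻¹ * (U * M * Uᴴ) * Uᴴ⁻¹
        = U⁻¹ * U * (M * (Uᴴ * Uᴴ⁻¹)) := by simp only [Matrix.mul_assoc]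
      _ = M := by rw [Matrix.nonsing_inv_mul _ hdet, Matrix.mul_nonsing_inv _ hdetH,
            Matrix.one_mul, Matrix.mul_one]
  rwa [e] at key

lemma myFromBlocks_sub {l o : Type*} (A A' : Matrix m l ℝ) (B B' : Matrix m o ℝ)
    (C C' : Matrix n l ℝ) (D D' : Matrix n o ℝ) :
    fromBlocks A B C D - fromBlocks A' B' C' D'
      = fromBlocks (A - A') (B - B') (C - C') (D - D') := by
  rw [sub_eq_add_neg, fromBlocks_neg, fromBlocks_add]
  congr 1

end Helpers

/-- Corollary 2: estimator design for an unstable system when the adversary has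
direct access to the measurements, with estimator gain `B̂ = Ŷ⁻¹Ẑ`, error
covariance bound `Ē`, process noise covariance `W`, input privacy noise
covariance `Γ_w⁻¹`, and measurement noise covariance `V`. -/
theorem corollary2_estimator_lmi
    (n p d m : ℕ) (hn : 0 < n) (hp : 0 < p) (hd : 0 < d) (hm : 0 < m)
    (A : Matrix (Fin n) (Fin n) ℝ) (C : Matrix (Fin p) (Fin n) ℝ)
    (D : Matrix (Fin n) (Fin d) ℝ) (B : Matrix (Fin n) (Fin m) ℝ)
    (Zhat : Matrix (Fin n) (Fin p) ℝ)
    (Yhat : Matrix (Fin n) (Fin n) ℝ) (hYhat : Yhat.PosDef)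
    (Ebar : Matrix (Fin n) (Fin n) ℝ) (hEbar : Ebar.IsHermitian)
    (W : Matrix (Fin d) (Fin d) ℝ) (V : Matrix (Fin p) (Fin p) ℝ)
    (Gw : Matrix (Fin m) (Fin m) ℝ)
    (hW : W.PosDef) (hV : V.PosDef) (hGw : Gw.PosDef)
    (Bhat : Matrix (Fin n) (Fin p) ℝ) (E : Matrix (Fin n) (Fin n) ℝ)
    (hBhatdef : Bhat = Yhat⁻¹ * Zhat) (hEdef : E = Yhat⁻¹) :
    ((fromBlocks Ebar 1 1 Yhat).PosDef ∧
      (fromBlocks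
        (fromBlocks
          (fromBlocks Yhat (Yhat * A - Zhat * C) (Yhat * A - Zhat * C)ᵀ Yhat)
          (fromBlocks (Yhat * D) (Yhat * B) 0 0)
          (fromBlocks (Yhat * D) (Yhat * B) 0 0)ᵀ
          (fromBlocks W⁻¹ 0 0 Gw))
        (fromRows (fromRows Zhat 0) 0)
        (fromRows (fromRows Zhat 0) 0)ᵀ
        V⁻¹).PosDef)
    ↔
    ((Ebar - E).PosDef ∧
      (E - ((A - Bhat * C) * E * (A - Bhat * C)ᵀ + D * W * Dᵀ + B * Gw⁻¹ * Bᵀ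
        + Bhat * V * Bhatᵀ)).PosDef) := by
  subst hBhatdef hEdef
  have hYH : Yhatᴴ = Yhat := hYhat.1
  have hYi : (Yhat⁻¹).PosDef := hYhat.inv
  have hYiH : (Yhat⁻¹)ᴴ = Yhat⁻¹ := hYi.1
  have hdetY : IsUnit Yhat.det := hYhat.det_pos.ne'.isUnit
  have hdetW : IsUnit W.det := hW.det_pos.ne'.isUnit
  have hdetV : IsUnit V.det := hV.det_pos.ne'.isUnit
  have hdetG : IsUnit Gw.det := hGw.det_pos.ne'.isUnit
  simp only [← conjTranspose_eq_transpose_of_trivial]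
  -- Part 1
  have part1 : (fromBlocks Ebar 1 1 Yhat).PosDef ↔ (Ebar - Yhat⁻¹).PosDef := by
    have h := myPosDef_fromBlocks₂₂ Ebar 1 hYhat
    simpa using h
  -- abbreviations
  set K : Matrix (Fin n) (Fin n) ℝ := Yhat * A - Zhat * C with hKdef
  set Q : Matrix (Fin n ⊕ Fin n) (Fin d ⊕ Fin m) ℝ := fromBlocks (Yhat * D) (Yhat * B) 0 0
    with hQdef
  set S : Matrix (Fin d ⊕ Fin m) (Fin d ⊕ Fin m) ℝ := fromBlocks W⁻¹ 0 0 Gw with hSdef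
  set R : Matrix ((Fin n ⊕ Fin n) ⊕ (Fin d ⊕ Fin m)) (Fin p) ℝ :=
    fromRows (fromRows Zhat 0) 0 with hRdef
  -- S is positive definite and its inverse is block diagonal
  have hS : S.PosDef := by
    have h := (myPosDef_fromBlocks₂₂ W⁻¹ (0 : Matrix (Fin d) (Fin m) ℝ) hGw).mpr (by simpa using hW.inv)
    simpa [hSdef] using h
  have hSinv : S⁻¹ = fromBlocks W 0 0 Gw⁻¹ := by
    apply inv_eq_right_inv
    rw [hSdef, fromBlocks_multiply]
    simp [Matrix.nonsing_inv_mul W hdetW, Matrix.mul_nonsing_inv Gw hdetG, fromBlocks_one]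
  -- Step 1 : peel off the V⁻¹ block
  have step1 : (fromBlocks (fromBlocks (fromBlocks Yhat K Kᴴ Yhat) Q Qᴴ S) R Rᴴ V⁻¹).PosDef
      ↔ (fromBlocks (fromBlocks (Yhat - Zhat * V * Zhatᴴ) K Kᴴ Yhat) Q Qᴴ S).PosDef := by
    rw [myPosDef_fromBlocks₂₂ _ R hV.inv,
      Matrix.nonsing_inv_nonsing_inv V hdetV]
    have eR : R * V * Rᴴ = fromBlocks (fromBlocks (Zhat * V * Zhatᴴ) 0 0 0) 0 0 0 := by
      ext i j
      rcases i with (i | i) | i <;> rcases j with (j | j) | j <;>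
        simp [hRdef, mul_apply, conjTranspose_apply, fromRows_apply_inl, fromRows_apply_inr,
          fromBlocks_apply₁₁, fromBlocks_apply₁₂, fromBlocks_apply₂₁, fromBlocks_apply₂₂]
    rw [eR, myFromBlocks_sub, myFromBlocks_sub]
    simp
  -- Step 2 : peel off the S block
  have step2 : (fromBlocks (fromBlocks (Yhat - Zhat * V * Zhatᴴ) K Kᴴ Yhat) Q Qᴴ S).PosDef
      ↔ (fromBlocks
          (Yhat - Zhat * V * Zhatᴴ
            - (Yhat * D * W * (Yhat * D)ᴴ + Yhat * B * Gw⁻¹ * (Yhat * B)ᴴ))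
          K Kᴴ Yhat).PosDef := by
    rw [myPosDef_fromBlocks₂₂ _ Q hS]
    have eQ : Q * S⁻¹ * Qᴴ =
        fromBlocks (Yhat * D * W * (Yhat * D)ᴴ + Yhat * B * Gw⁻¹ * (Yhat * B)ᴴ) 0 0 0 := by
      rw [hSinv, hQdef, fromBlocks_conjTranspose, fromBlocks_multiply, fromBlocks_multiply]
      simp [Matrix.mul_assoc]
    rw [eQ, myFromBlocks_sub]
    simp
  -- Step 3 : peel off the remaining Yhat block
  have step3 : (fromBlocks
          (Yhat - Zhat * V * Zhatᴴ
            - (Yhat * D * W * (Yhat * D)ᴴ + Yhat * B * Gw⁻¹ * (Yhat * B)ᴴ))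
          K Kᴴ Yhat).PosDef
      ↔ (Yhat - Zhat * V * Zhatᴴ
            - (Yhat * D * W * (Yhat * D)ᴴ + Yhat * B * Gw⁻¹ * (Yhat * B)ᴴ)
            - K * Yhat⁻¹ * Kᴴ).PosDef := by
    exact myPosDef_fromBlocks₂₂ _ K hYhat
  -- Step 4 : congruence with Yhat⁻¹
  have hmul1 : Yhat⁻¹ * Yhat = 1 := Matrix.nonsing_inv_mul Yhat hdetY
  have hmul2 : Yhat * Yhat⁻¹ = 1 := Matrix.mul_nonsing_inv Yhat hdetY
  have c1 : ∀ {k : Type} (X : Matrix (Fin n) k ℝ), Yhat⁻¹ * (Yhat * X) = X := fun X => by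
    rw [← Matrix.mul_assoc, hmul1, Matrix.one_mul]
  have c2 : ∀ {k : Type} (X : Matrix (Fin n) k ℝ), Yhat * (Yhat⁻¹ * X) = X := fun X => by
    rw [← Matrix.mul_assoc, hmul2, Matrix.one_mul]
  have step4 : (Yhat - Zhat * V * Zhatᴴ
            - (Yhat * D * W * (Yhat * D)ᴴ + Yhat * B * Gw⁻¹ * (Yhat * B)ᴴ)
            - K * Yhat⁻¹ * Kᴴ).PosDef
      ↔ (Yhat⁻¹ - ((A - Yhat⁻¹ * Zhat * C) * Yhat⁻¹ * (A - Yhat⁻¹ * Zhat * C)ᴴ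
          + D * W * Dᴴ + B * Gw⁻¹ * Bᴴ + Yhat⁻¹ * Zhat * V * (Yhat⁻¹ * Zhat)ᴴ)).PosDef := by
    rw [← myPosDef_conj_iff (M := Yhat - Zhat * V * Zhatᴴ
            - (Yhat * D * W * (Yhat * D)ᴴ + Yhat * B * Gw⁻¹ * (Yhat * B)ᴴ)
            - K * Yhat⁻¹ * Kᴴ) hYi.isUnit]
    have key : Yhat⁻¹ * (Yhat - Zhat * V * Zhatᴴ
            - (Yhat * D * W * (Yhat * D)ᴴ + Yhat * B * Gw⁻¹ * (Yhat * B)ᴴ)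
            - K * Yhat⁻¹ * Kᴴ) * (Yhat⁻¹)ᴴ
        = Yhat⁻¹ - ((A - Yhat⁻¹ * Zhat * C) * Yhat⁻¹ * (A - Yhat⁻¹ * Zhat * C)ᴴ
          + D * W * Dᴴ + B * Gw⁻¹ * Bᴴ + Yhat⁻¹ * Zhat * V * (Yhat⁻¹ * Zhat)ᴴ) := by
      rw [hKdef]
      simp only [conjTranspose_mul, conjTranspose_sub, hYH, hYiH,
        Matrix.mul_sub, Matrix.sub_mul, Matrix.mul_add, Matrix.add_mul,
        Matrix.mul_assoc, c1, c2, hmul1, hmul2, Matrix.mul_one, Matrix.one_mul]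
      abel
    rw [key]
  exact and_congr part1 ((step1.trans step2).trans (step3.trans step4))
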